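/- For every d ≥ 2 there is a spanning tree of Q_d that is weakly (Q_d, Q_2)-saturated; hence wsat(Q_d, Q_2) = 2^d − 1. -/

import Mathlib

open SimpleGraph Finset

def cube (d : ℕ) : SimpleGraph (Fin d → ZMod 2) :=
  SimpleGraph.fromRel (fun u v => ∃ i, u i ≠ v i ∧ ∀ j, j ≠ i → u j = v j)

def grid (k d : ℕ) : SimpleGraph (Fin d → Fin k) :=
  SimpleGraph.fromRel (fun u v => ∃ i, ((u i : ℕ)) + 1 = (v i : ℕ) ∧ ∀ j, j ≠ i → u j = v j)

def CopyAt {α β : Type*} (H : SimpleGraph α) (G : SimpleGraph β) (u v : β) : Prop :=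
  ∃ f : α → β, Function.Injective f ∧ (∀ ⦃a b⦄, H.Adj a b → G.Adj (f a) (f b)) ∧
    ∃ a b, H.Adj a b ∧ f a = u ∧ f b = v

def ContainsCopy {α β : Type*} (H : SimpleGraph α) (G : SimpleGraph β) : Prop :=
  ∃ f : α → β, Function.Injective f ∧ ∀ ⦃a b⦄, H.Adj a b → G.Adj (f a) (f b)

def WeaklySaturated {α β : Type*} (F G : SimpleGraph β) (H : SimpleGraph α) : Prop :=
  G ≤ F ∧ ∃ (n : ℕ) (seq : ℕ → SimpleGraph β), seq 0 = G ∧ seq n = F ∧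
    ∀ i < n, ∃ u v : β, ¬ (seq i).Adj u v ∧ F.Adj u v ∧
      seq (i + 1) = seq i ⊔ SimpleGraph.fromEdgeSet {s(u, v)} ∧
      CopyAt H (seq (i + 1)) u v

noncomputable def wsatNum {α β : Type*} (F : SimpleGraph β) (H : SimpleGraph α) : ℕ :=
  sInf {n | ∃ G, WeaklySaturated F G H ∧ G.edgeSet.ncard = n}

def Saturated {α β : Type*} (F G : SimpleGraph β) (H : SimpleGraph α) : Prop :=
  G ≤ F ∧ ¬ ContainsCopy H G ∧ ∀ u v : β, F.Adj u v → ¬ G.Adj u v →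
    ContainsCopy H (G ⊔ SimpleGraph.fromEdgeSet {s(u, v)})

noncomputable def satNum {α β : Type*} (F : SimpleGraph β) (H : SimpleGraph α) : ℕ :=
  sInf {n | ∃ G, Saturated F G H ∧ G.edgeSet.ncard = n}

open Function

namespace WsatAux

abbrev V (d : ℕ) := Fin d → ZMod 2

lemma zmod2_cases (a : ZMod 2) : a = 0 ∨ a = 1 := by revert a; decide

lemma zmod2_ne_iff {a b : ZMod 2} : a ≠ b ↔ (a = 0 ∧ b = 1) ∨ (a = 1 ∧ b = 0) := by
  revert a b; decide

lemma cube_adj {d : ℕ} {u v : V d} :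
    (cube d).Adj u v ↔ ∃ i, u i ≠ v i ∧ ∀ j, j ≠ i → u j = v j := by
  constructor
  · rintro ⟨hne, (⟨i, h1, h2⟩ | ⟨i, h1, h2⟩)⟩
    · exact ⟨i, h1, h2⟩
    · exact ⟨i, fun h => h1 h.symm, fun j hj => (h2 j hj).symm⟩
  · rintro ⟨i, h1, h2⟩
    exact ⟨fun h => h1 (congrFun h i), Or.inl ⟨i, h1, h2⟩⟩

def P {d : ℕ} (x y : V d) : Prop :=
  ∃ i, x i = 1 ∧ (∀ j, i < j → x j = 0) ∧ y = Function.update x i 0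

def tree (d : ℕ) : SimpleGraph (V d) := SimpleGraph.fromRel P

lemma P_ne {d : ℕ} {x y : V d} (h : P x y) : x ≠ y := by
  obtain ⟨i, h1, _, rfl⟩ := h
  intro h
  have := congrFun h i
  rw [h1, Function.update_self] at this
  exact one_ne_zero this

lemma tree_adj {d : ℕ} {x y : V d} : (tree d).Adj x y ↔ P x y ∨ P y x := by
  constructor
  · rintro ⟨_, h⟩; exact h
  · rintro (h | h)
    · exact ⟨P_ne h, Or.inl h⟩
    · exact ⟨(P_ne h).symm, Or.inr h⟩

lemma tree_le_cube {d : ℕ} : tree d ≤ cube d := by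
  intro x y h
  rcases tree_adj.mp h with ⟨i, h1, _, rfl⟩ | ⟨i, h1, _, rfl⟩
  · refine cube_adj.mpr ⟨i, ?_, fun j hj => ?_⟩
    · rw [h1, Function.update_self]; exact one_ne_zero
    · rw [Function.update_of_ne hj]
  · refine cube_adj.mpr ⟨i, ?_, fun j hj => ?_⟩
    · rw [h1, Function.update_self]; exact zero_ne_one
    · rw [Function.update_of_ne hj]

def val {d : ℕ} (u : V d) : ℕ := ∑ i, (u i).val * 2 ^ (i : ℕ)

lemma val_update_add {d : ℕ} {u : V d} {i : Fin d} (h : u i = 1) :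
    val (Function.update u i 0) + 2 ^ (i : ℕ) = val u := by
  unfold val
  rw [← Finset.sum_erase_add _ _ (Finset.mem_univ i), ← Finset.sum_erase_add _ _ (Finset.mem_univ i)]
  have : ∀ j ∈ Finset.univ.erase i, ((Function.update u i 0) j).val * 2 ^ (j : ℕ) = (u j).val * 2 ^ (j : ℕ) := by
    intro j hj
    rw [Function.update_of_ne (Finset.ne_of_mem_erase hj)]
  rw [Finset.sum_congr rfl this, Function.update_self, h]
  simp [ZMod.val_one]

lemma val_update_lt {d : ℕ} {u : V d} {i : Fin d} (h : u i = 1) :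
    val (Function.update u i 0) < val u := by
  have := val_update_add h
  have h2 : 0 < 2 ^ (i : ℕ) := Nat.pow_pos (by norm_num)
  omega


lemma exists_top {d : ℕ} {u : V d} (h : ∃ i, u i = 1) :
    ∃ t, u t = 1 ∧ ∀ j, t < j → u j = 0 := by
  classical
  obtain ⟨i, hi⟩ := h
  have hne : (Finset.univ.filter (fun j => u j = 1)).Nonempty :=
    ⟨i, by simp [hi]⟩
  refine ⟨(Finset.univ.filter (fun j => u j = 1)).max' hne, ?_, ?_⟩
  · have := Finset.max'_mem _ hne
    simpa using this
  · intro j hj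
    rcases zmod2_cases (u j) with h0 | h1
    · exact h0
    · exfalso
      have : j ≤ (Finset.univ.filter (fun j => u j = 1)).max' hne :=
        Finset.le_max' _ _ (by simp [h1])
      exact absurd hj (not_lt.mpr this)

lemma tree_reach_zero {d : ℕ} (u : V d) : (tree d).Reachable u 0 := by
  classical
  suffices h : ∀ n (u : V d), val u = n → (tree d).Reachable u 0 from h (val u) u rfl
  intro n
  induction n using Nat.strong_induction_on with
  | _ n ih =>
    intro u hu
    by_cases h0 : u = 0
    · subst h0; rfl
    · have h1 : ∃ i, u i = 1 := by
        by_contra hc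
        push_neg at hc
        apply h0
        funext j
        rcases zmod2_cases (u j) with h | h
        · exact h
        · exact absurd h (hc j)
      obtain ⟨t, ht1, ht2⟩ := exists_top h1
      have hadj : (tree d).Adj u (Function.update u t 0) :=
        tree_adj.mpr (Or.inl ⟨t, ht1, ht2, rfl⟩)
      have hlt : val (Function.update u t 0) < n := hu ▸ val_update_lt ht1
      exact hadj.reachable.trans (ih _ hlt _ rfl)

lemma tree_connected {d : ℕ} : (tree d).Connected :=
  ⟨fun u v => (tree_reach_zero u).trans (tree_reach_zero v).symm⟩

lemma reach_mem_iff {β : Type*} {G : SimpleGraph β} {S : Set β}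
    (hS : ∀ ⦃x y⦄, G.Adj x y → (x ∈ S ↔ y ∈ S)) {a b : β} (h : G.Reachable a b) :
    a ∈ S ↔ b ∈ S := by
  obtain ⟨w⟩ := h
  induction w with
  | nil => rfl
  | cons h p ih => exact (hS h).trans ih


lemma bridge_P {d : ℕ} {x : V d} {i : Fin d} (hx1 : x i = 1) (hx2 : ∀ j, i < j → x j = 0) :
    ¬ ((tree d) \ SimpleGraph.fromEdgeSet {s(x, Function.update x i 0)}).Reachable x
      (Function.update x i 0) := by
  classical
  set S : Set (V d) := {z | ∀ j, j ≤ i → z j = x j} with hSdef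
  have claim : ∀ a b : V d, P a b → s(a, b) ≠ s(x, Function.update x i 0) →
      (a ∈ S ↔ b ∈ S) := by
    rintro a b ⟨k, ha1, ha2, rfl⟩ hne
    constructor
    · intro haS
      have hik : i ≤ k := by
        by_contra hik
        push_neg at hik
        have h0 : a i = 0 := ha2 i hik
        have h1 : a i = 1 := by rw [haS i le_rfl, hx1]
        simp [h0] at h1
      rcases lt_or_eq_of_le hik with hlt | heq
      · intro j hj
        rw [Function.update_of_ne (ne_of_lt (lt_of_le_of_lt hj hlt))]
        exact haS j hj
      · exfalso
        apply hne
        have hax : a = x := by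
          funext j
          rcases le_or_gt j i with hji | hji
          · exact haS j hji
          · rw [ha2 j (heq ▸ hji), hx2 j hji]
        rw [hax, ← heq]
    · intro hbS
      have hki : k ≠ i := by
        intro hki
        subst hki
        have := hbS k le_rfl
        rw [Function.update_self] at this
        rw [← this] at hx1
        · exact zero_ne_one hx1
      rcases lt_or_gt_of_ne hki with hk | hk
      · exfalso
        have h0 : a i = 0 := ha2 i hk
        have h1 := hbS i le_rfl
        rw [Function.update_of_ne (Ne.symm hki), h0, hx1] at h1
        exact zero_ne_one h1
      · intro j hj
        have := hbS j hj
        rwa [Function.update_of_ne (ne_of_lt (lt_of_le_of_lt hj hk))] at this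
  have hSadj : ∀ ⦃a b : V d⦄,
      ((tree d) \ SimpleGraph.fromEdgeSet {s(x, Function.update x i 0)}).Adj a b →
      (a ∈ S ↔ b ∈ S) := by
    intro a b hab
    have h1 : (tree d).Adj a b := hab.1
    have h2 : s(a, b) ≠ s(x, Function.update x i 0) := by
      intro he
      exact hab.2 (by simp [SimpleGraph.fromEdgeSet_adj, he, h1.ne])
    rcases tree_adj.mp h1 with hp | hp
    · exact claim a b hp h2
    · refine (claim b a hp ?_).symm
      rw [Sym2.eq_swap]
      exact h2
  intro hreach
  have hiff := reach_mem_iff hSadj hreach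
  have hxS : x ∈ S := fun j hj => rfl
  have hyS : Function.update x i 0 ∉ S := by
    intro h
    have := h i le_rfl
    rw [Function.update_self, hx1] at this
    exact zero_ne_one this
  exact hyS (hiff.mp hxS)

lemma tree_isTree {d : ℕ} : (tree d).IsTree := by
  refine ⟨tree_connected, ?_⟩
  rw [SimpleGraph.isAcyclic_iff_forall_adj_isBridge]
  intro v w h
  rw [SimpleGraph.isBridge_iff]
  show ¬ _
  rcases tree_adj.mp h with hp | hp
  · obtain ⟨i, h1, h2, rfl⟩ := hp
    exact bridge_P h1 h2
  · obtain ⟨i, h1, h2, rfl⟩ := hp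
    intro hr
    apply bridge_P h1 h2
    rw [Sym2.eq_swap] at hr
    exact hr.symm


def toEdge {d : ℕ} (p : V d × Fin d) : Option (Sym2 (V d)) :=
  if p.1 p.2 = 1 ∧ ∃ t, p.2 < t ∧ p.1 t = 1 then
    some s(Function.update p.1 p.2 0, p.1) else none

lemma toEdge_eq_some {d : ℕ} {p : V d × Fin d} {e : Sym2 (V d)} :
    toEdge p = some e ↔
      (p.1 p.2 = 1 ∧ ∃ t, p.2 < t ∧ p.1 t = 1) ∧ e = s(Function.update p.1 p.2 0, p.1) := by
  unfold toEdge
  split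
  · rename_i h
    simp only [Option.some.injEq, h, true_and]
    exact ⟨fun he => he.symm, fun he => he.symm⟩
  · rename_i h
    simp [h]

noncomputable def L (d : ℕ) : List (Sym2 (V d)) :=
  ((Finset.univ : Finset (V d × Fin d)).toList.mergeSort
    (fun p q => decide (val p.1 ≤ val q.1))).filterMap toEdge

def mx {d : ℕ} : Sym2 (V d) → ℕ :=
  Sym2.lift ⟨fun a b => max (val a) (val b), fun a b => max_comm _ _⟩

lemma mx_mk {d : ℕ} (a b : V d) : mx s(a, b) = max (val a) (val b) := rfl

lemma mx_edge {d : ℕ} {w : V d} {i : Fin d} (h : w i = 1) :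
    mx s(Function.update w i 0, w) = val w := by
  rw [mx_mk, max_eq_right (le_of_lt (val_update_lt h))]

lemma L_sorted_aux {d : ℕ} :
    (((Finset.univ : Finset (V d × Fin d)).toList.mergeSort
      (fun p q => decide (val p.1 ≤ val q.1)))).Pairwise
      (fun p q => (fun p q : V d × Fin d => decide (val p.1 ≤ val q.1)) p q = true) := by
  apply List.pairwise_mergeSort
  · intro a b c h1 h2
    simp only [decide_eq_true_eq] at *
    omega
  · intro a b
    simp only [Bool.or_eq_true, decide_eq_true_eq]
    omega

lemma L_pairwise {d : ℕ} : (L d).Pairwise (fun e e' => mx e ≤ mx e') := by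
  refine List.pairwise_filterMap.mpr (L_sorted_aux.imp ?_)
  intro p q hpq e he e' he'
  rw [toEdge_eq_some] at he he'
  obtain ⟨⟨h1, _⟩, rfl⟩ := he
  obtain ⟨⟨h1', _⟩, rfl⟩ := he'
  rw [mx_edge h1, mx_edge h1']
  simpa using hpq

lemma toEdge_inj {d : ℕ} (p q : V d × Fin d) (e : Sym2 (V d))
    (hp : e ∈ toEdge p) (hq : e ∈ toEdge q) : p = q := by
  rw [Option.mem_def, toEdge_eq_some] at hp hq
  obtain ⟨⟨h1, _⟩, rfl⟩ := hp
  obtain ⟨⟨h1', _⟩, heq⟩ := hq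
  rw [Sym2.eq_iff] at heq
  rcases heq with ⟨ha, hb⟩ | ⟨ha, hb⟩
  · -- q.1 = p.1, updates equal
    have hij : p.2 = q.2 := by
      by_contra hne
      have := congrFun ha p.2
      rw [Function.update_self, Function.update_of_ne hne, ← hb, h1] at this
      exact absurd this (by decide)
    exact Prod.ext_iff.mpr ⟨hb, hij⟩
  · exfalso
    have l1 : val (Function.update q.1 q.2 0) < val q.1 := val_update_lt h1'
    have l2 : val (Function.update p.1 p.2 0) < val p.1 := val_update_lt h1
    rw [ha] at l2
    rw [hb] at l2
    omega

lemma L_nodup {d : ℕ} : (L d).Nodup := by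
  refine List.Nodup.filterMap toEdge_inj ?_
  exact ((List.mergeSort_perm _ _)).symm.nodup (Finset.nodup_toList _)

lemma mem_L {d : ℕ} {e : Sym2 (V d)} :
    e ∈ L d ↔ ∃ w : V d, ∃ i : Fin d,
      (w i = 1 ∧ ∃ t, i < t ∧ w t = 1) ∧ e = s(Function.update w i 0, w) := by
  unfold L
  rw [List.mem_filterMap]
  constructor
  · rintro ⟨p, _, hp⟩
    rw [toEdge_eq_some] at hp
    exact ⟨p.1, p.2, hp.1, hp.2⟩
  · rintro ⟨w, i, hc, rfl⟩
    refine ⟨(w, i), ?_, ?_⟩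
    · rw [List.mem_mergeSort, Finset.mem_toList]
      exact Finset.mem_univ _
    · rw [toEdge_eq_some]
      exact ⟨hc, rfl⟩


noncomputable def seqG (d k : ℕ) : SimpleGraph (V d) :=
  tree d ⊔ SimpleGraph.fromEdgeSet {e | e ∈ (L d).take k}

lemma seqG_zero {d : ℕ} : seqG d 0 = tree d := by
  have h : {e : Sym2 (V d) | e ∈ (L d).take 0} = ∅ := by simp
  show tree d ⊔ _ = tree d
  rw [h, SimpleGraph.fromEdgeSet_empty, sup_bot_eq]

lemma tree_le_seqG {d k : ℕ} : tree d ≤ seqG d k := le_sup_left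

lemma eq_update {d : ℕ} {x y : V d} {i : Fin d} (h1 : x i = 0) (h2 : y i = 1)
    (hoff : ∀ j, j ≠ i → x j = y j) : x = Function.update y i 0 := by
  funext j
  by_cases hj : j = i
  · subst hj; rw [Function.update_self, h1]
  · rw [Function.update_of_ne hj]; exact hoff j hj

lemma cube_edge_in_seq {d : ℕ} {x y : V d} {i : Fin d} (h1 : x i = 0) (h2 : y i = 1)
    (hoff : ∀ j, j ≠ i → x j = y j) :
    (tree d).Adj x y ∨ s(x, y) ∈ L d := by
  have hx : x = Function.update y i 0 := eq_update h1 h2 hoff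
  by_cases hc : ∃ t, i < t ∧ y t = 1
  · right
    rw [mem_L]
    exact ⟨y, i, ⟨h2, hc⟩, by rw [hx]⟩
  · left
    push_neg at hc
    refine tree_adj.mpr (Or.inr ⟨i, h2, fun j hj => ?_, hx⟩)
    rcases zmod2_cases (y j) with h | h
    · exact h
    · exact absurd h (hc j hj)

lemma edge_L_cube {d : ℕ} {x y : V d} (h : s(x, y) ∈ L d) (hne : x ≠ y) :
    (cube d).Adj x y := by
  rw [mem_L] at h
  obtain ⟨w, i, ⟨h1, _⟩, heq⟩ := h
  have hadj : (cube d).Adj (Function.update w i 0) w := by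
    refine cube_adj.mpr ⟨i, ?_, fun j hj => Function.update_of_ne hj _ _⟩
    rw [Function.update_self, h1]
    exact zero_ne_one
  rw [Sym2.eq_iff] at heq
  rcases heq with ⟨ha, hb⟩ | ⟨ha, hb⟩
  · rw [ha, hb]; exact hadj
  · rw [ha, hb]; exact hadj.symm

lemma seqG_le_cube {d k : ℕ} : seqG d k ≤ cube d := by
  intro x y h
  rcases h with h | h
  · exact tree_le_cube h
  · rw [SimpleGraph.fromEdgeSet_adj] at h
    exact edge_L_cube (List.mem_of_mem_take h.1) h.2

lemma seqG_top {d : ℕ} : seqG d (L d).length = cube d := by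
  apply le_antisymm seqG_le_cube
  intro x y h
  obtain ⟨i, hxy, hoff⟩ := cube_adj.mp h
  show (tree d ⊔ _).Adj x y
  rcases zmod2_ne_iff.mp hxy with ⟨ha, hb⟩ | ⟨ha, hb⟩
  · rcases cube_edge_in_seq ha hb hoff with ht | hm
    · exact Or.inl ht
    · refine Or.inr ((SimpleGraph.fromEdgeSet_adj _).mpr ⟨?_, h.ne⟩)
      rw [List.take_length]
      exact hm
  · rcases cube_edge_in_seq hb ha (fun j hj => (hoff j hj).symm) with ht | hm
    · exact Or.inl ht.symm
    · refine Or.inr ((SimpleGraph.fromEdgeSet_adj _).mpr ⟨?_, h.ne⟩)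
      rw [List.take_length, Sym2.eq_swap]
      exact hm

lemma seqG_succ {d k : ℕ} (hk : k < (L d).length) :
    seqG d (k + 1) = seqG d k ⊔ SimpleGraph.fromEdgeSet {(L d)[k]} := by
  show tree d ⊔ _ = (tree d ⊔ _) ⊔ _
  rw [sup_assoc]
  congr 1
  have htake : (L d).take (k + 1) = (L d).take k ++ [(L d)[k]] := by
    rw [List.take_succ, List.getElem?_eq_getElem hk]
    rfl
  have hset : {e : Sym2 (V d) | e ∈ (L d).take (k + 1)} =
      {e | e ∈ (L d).take k} ∪ {(L d)[k]} := by
    rw [htake]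
    ext e
    simp only [List.mem_append, List.mem_singleton, Set.mem_union, Set.mem_setOf_eq,
      Set.mem_singleton_iff]
  rw [hset, SimpleGraph.fromEdgeSet_union]


lemma step_lemma {d : ℕ} {k : ℕ} (hk : k < (L d).length) :
    ∃ u v : V d, ¬ (seqG d k).Adj u v ∧ (cube d).Adj u v ∧
      seqG d (k + 1) = seqG d k ⊔ SimpleGraph.fromEdgeSet {s(u, v)} ∧
      CopyAt (cube 2) (seqG d (k + 1)) u v := by
  classical
  have hmem : (L d)[k] ∈ L d := List.getElem_mem hk
  obtain ⟨w, i, ⟨h1, hex⟩, heq⟩ := mem_L.mp hmem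
  set u : V d := Function.update w i 0 with hu
  obtain ⟨t, ht1, ht2⟩ := exists_top ⟨i, h1⟩
  have hti : i < t := by
    obtain ⟨t', ht', hw'⟩ := hex
    have htt' : t' ≤ t := by
      by_contra hh
      push_neg at hh
      rw [ht2 t' hh] at hw'
      exact absurd hw' (by decide)
    exact lt_of_lt_of_le ht' htt'
  have hit : i ≠ t := ne_of_lt hti
  set w' : V d := Function.update w t 0 with hw'def
  set u' : V d := Function.update u t 0 with hu'def
  have hui : u i = 0 := by rw [hu, Function.update_self]
  have hut : u t = 1 := by rw [hu, Function.update_of_ne (Ne.symm hit)]; exact ht1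
  have hw'i : w' i = 1 := by rw [hw'def, Function.update_of_ne hit]; exact h1
  have hw't : w' t = 0 := by rw [hw'def, Function.update_self]
  have hu'i : u' i = 0 := by rw [hu'def, Function.update_of_ne hit]; exact hui
  have hu'w' : u' = Function.update w' i 0 := by
    funext j
    by_cases hji : j = i
    · subst hji
      rw [Function.update_self, hu'i]
    · rw [Function.update_of_ne hji]
      by_cases hjt : j = t
      · subst hjt
        rw [hu'def, Function.update_self, hw'def, Function.update_self]
      · rw [hu'def, Function.update_of_ne hjt, hu, Function.update_of_ne hji,
          hw'def, Function.update_of_ne hjt]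
  have hTww' : (tree d).Adj w w' := tree_adj.mpr (Or.inl ⟨t, ht1, ht2, rfl⟩)
  have hTuu' : (tree d).Adj u u' := by
    refine tree_adj.mpr (Or.inl ⟨t, hut, fun j hj => ?_, rfl⟩)
    rw [hu, Function.update_of_ne (ne_of_gt (lt_trans hti hj))]
    exact ht2 j hj
  have hnew : u ≠ w := by
    intro hh
    have := congrFun hh i
    rw [hui, h1] at this
    exact absurd this (by decide)
  have hu'ne : u' ≠ w' := by
    intro hh
    have := congrFun hh i
    rw [hu'i, hw'i] at this
    exact absurd this (by decide)
  have hstep_eq : seqG d (k + 1) = seqG d k ⊔ SimpleGraph.fromEdgeSet {s(u, w)} := by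
    rw [seqG_succ hk, heq]
  have hmono : seqG d k ≤ seqG d (k + 1) := by rw [hstep_eq]; exact le_sup_left
  have hADJ : (seqG d k).Adj u' w' := by
    by_cases hc : ∃ s, i < s ∧ w' s = 1
    · have hmem' : s(u', w') ∈ L d := mem_L.mpr ⟨w', i, ⟨hw'i, hc⟩, by rw [hu'w']⟩
      obtain ⟨q, hq, hqe⟩ := List.mem_iff_getElem.mp hmem'
      have hmxlt : mx s(u', w') < mx ((L d)[k]) := by
        rw [heq, mx_edge h1, hu'w', mx_edge hw'i, hw'def]
        exact val_update_lt ht1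
      have hqk : q < k := by
        rcases lt_trichotomy q k with h | h | h
        · exact h
        · exfalso
          subst h
          rw [hqe] at hmxlt
          omega
        · exfalso
          have := (List.pairwise_iff_getElem.mp L_pairwise) k q hk hq h
          rw [hqe] at this
          omega
      refine Or.inr ((SimpleGraph.fromEdgeSet_adj _).mpr ⟨?_, hu'ne⟩)
      show s(u', w') ∈ (L d).take k
      refine List.mem_iff_getElem.mpr ⟨q, ?_, ?_⟩
      · rw [List.length_take]
        exact lt_min hqk hq
      · rw [List.getElem_take]
        exact hqe
    · push_neg at hc
      refine Or.inl (tree_adj.mpr (Or.inr ⟨i, hw'i, fun j hj => ?_, hu'w'⟩))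
      rcases zmod2_cases (w' j) with h | h
      · exact h
      · exact absurd h (hc j hj)
  have hnotadj : ¬ (seqG d k).Adj u w := by
    intro hadj
    rcases hadj with ht | he
    · rcases tree_adj.mp ht with ⟨b, hb1, hb2, hb3⟩ | ⟨b, hb1, hb2, hb3⟩
      · by_cases hbi : b = i
        · subst hbi
          rw [hui] at hb1
          exact absurd hb1 (by decide)
        · have h4 : w b = 0 := by rw [hb3, Function.update_self]
          have h5 : u b = w b := by rw [hu, Function.update_of_ne hbi]
          rw [h5, h4] at hb1
          exact absurd hb1 (by decide)
      · by_cases hbi : b = i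
        · subst hbi
          have := hb2 t hti
          rw [this] at ht1
          exact absurd ht1 (by decide)
        · have := congrFun hb3 i
          rw [hui, Function.update_of_ne (fun hh => hbi hh.symm), h1] at this
          exact absurd this (by decide)
    · rw [SimpleGraph.fromEdgeSet_adj] at he
      have hmemtake : (L d)[k] ∈ (L d).take k := by rw [heq]; exact he.1
      obtain ⟨q, hq, hqe⟩ := List.mem_iff_getElem.mp hmemtake
      have hqlen : q < (L d).length := by
        rw [List.length_take] at hq
        omega
      have hqk : q < k := by
        rw [List.length_take] at hq
        omega
      rw [List.getElem_take] at hqe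
      have := (List.Nodup.getElem_inj_iff L_nodup).mp hqe
      omega
  -- the copy
  set f : (Fin 2 → ZMod 2) → V d :=
    fun x => Function.update (Function.update w i (x 0)) t (x 1) with hfdef
  have hf : ∀ x j, f x j = if j = t then x 1 else if j = i then x 0 else w j := by
    intro x j
    rw [hfdef]
    simp only [Function.update_apply]
  have himg : ∀ x : Fin 2 → ZMod 2,
      (x 0 = 1 → x 1 = 1 → f x = w) ∧ (x 0 = 0 → x 1 = 1 → f x = u) ∧
      (x 0 = 1 → x 1 = 0 → f x = w') ∧ (x 0 = 0 → x 1 = 0 → f x = u') := by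
    intro x
    have hu't : u' t = 0 := by rw [hu'def, Function.update_self]
    refine ⟨fun p q => ?_, fun p q => ?_, fun p q => ?_, fun p q => ?_⟩ <;>
    · funext j
      rw [hf, p, q]
      by_cases hjt : j = t
      · rw [if_pos hjt, hjt]
        first
          | exact ht1.symm
          | exact hut.symm
          | exact hw't.symm
          | exact hu't.symm
      · rw [if_neg hjt]
        by_cases hji : j = i
        · rw [if_pos hji, hji]
          first
            | exact h1.symm
            | exact hui.symm
            | exact hw'i.symm
            | exact hu'i.symm
        · rw [if_neg hji]
          try simp only [hu'def, hw'def, hu, Function.update_apply, if_neg hjt, if_neg hji]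
  have hinj : Function.Injective f := by
    intro x y hxy
    have h0 : x 0 = y 0 := by
      have := congrFun hxy i
      rw [hf, hf, if_neg hit, if_pos rfl, if_neg hit, if_pos rfl] at this
      exact this
    have h1' : x 1 = y 1 := by
      have := congrFun hxy t
      rw [hf, hf, if_pos rfl, if_pos rfl] at this
      exact this
    funext j
    fin_cases j
    · exact h0
    · exact h1'
  have hAdjUW : (seqG d (k + 1)).Adj u w := by
    rw [hstep_eq]
    exact Or.inr ((SimpleGraph.fromEdgeSet_adj _).mpr ⟨rfl, hnew⟩)
  have hhom : ∀ ⦃a b : Fin 2 → ZMod 2⦄, (cube 2).Adj a b → (seqG d (k + 1)).Adj (f a) (f b) := by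
    intro a b hab
    obtain ⟨c, hc, hcoff⟩ := cube_adj.mp hab
    fin_cases c
    · have hoth : a 1 = b 1 := hcoff 1 (by decide)
      rcases zmod2_ne_iff.mp hc with ⟨ha0, hb0⟩ | ⟨ha0, hb0⟩ <;>
        rcases zmod2_cases (a 1) with hA | hA <;>
          [skip; skip; skip; skip] <;>
            (try (have hB : b 1 = 0 := by rw [← hoth]; exact hA)) <;>
            (try (have hB : b 1 = 1 := by rw [← hoth]; exact hA))
      · -- a0=0 b0=1 a1=0 : f a = u', f b = w'
        rw [(himg a).2.2.2 ha0 hA, (himg b).2.2.1 hb0 hB]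
        exact hmono hADJ
      · -- a0=0 b0=1 a1=1 : u, w
        rw [(himg a).2.1 ha0 hA, (himg b).1 hb0 hB]
        exact hAdjUW
      · -- a0=1 b0=0 a1=0 : w', u'
        rw [(himg a).2.2.1 ha0 hA, (himg b).2.2.2 hb0 hB]
        exact (hmono hADJ).symm
      · -- a0=1 b0=0 a1=1 : w, u
        rw [(himg a).1 ha0 hA, (himg b).2.1 hb0 hB]
        exact hAdjUW.symm
    · have hoth : a 0 = b 0 := hcoff 0 (by decide)
      rcases zmod2_ne_iff.mp hc with ⟨ha1, hb1⟩ | ⟨ha1, hb1⟩ <;>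
        rcases zmod2_cases (a 0) with hA | hA <;>
          [skip; skip; skip; skip] <;>
            (try (have hB : b 0 = 0 := by rw [← hoth]; exact hA)) <;>
            (try (have hB : b 0 = 1 := by rw [← hoth]; exact hA))
      · -- a1=0 b1=1 a0=0 : u', u
        rw [(himg a).2.2.2 hA ha1, (himg b).2.1 hB hb1]
        exact ((tree_le_seqG.trans hmono) hTuu').symm
      · -- a1=0 b1=1 a0=1 : w', w
        rw [(himg a).2.2.1 hA ha1, (himg b).1 hB hb1]
        exact ((tree_le_seqG.trans hmono) hTww').symm
      · -- a1=1 b1=0 a0=0 : u, u'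
        rw [(himg a).2.1 hA ha1, (himg b).2.2.2 hB hb1]
        exact (tree_le_seqG.trans hmono) hTuu'
      · -- a1=1 b1=0 a0=1 : w, w'
        rw [(himg a).1 hA ha1, (himg b).2.2.1 hB hb1]
        exact (tree_le_seqG.trans hmono) hTww'
  have hcubeuw : (cube d).Adj u w := by
    refine cube_adj.mpr ⟨i, ?_, fun j hj => ?_⟩
    · rw [hui, h1]; exact zero_ne_one
    · rw [hu, Function.update_of_ne hj]
  refine ⟨u, w, hnotadj, hcubeuw, hstep_eq, f, hinj, hhom, ![0, 1], ![1, 1], ?_, ?_, ?_⟩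
  · refine cube_adj.mpr ⟨0, by decide, ?_⟩
    intro j hj
    fin_cases j
    · exact absurd rfl hj
    · rfl
  · exact (himg ![0, 1]).2.1 rfl rfl
  · exact (himg ![1, 1]).1 rfl rfl


lemma ws_tree {d : ℕ} : WeaklySaturated (cube d) (tree d) (cube 2) :=
  ⟨tree_le_cube, (L d).length, seqG d, seqG_zero, seqG_top, fun _ hi => step_lemma hi⟩

lemma adj_of_sup_not_eq {β : Type*} {H : SimpleGraph β} {u v x y : β}
    (h : (H ⊔ SimpleGraph.fromEdgeSet {s(u, v)}).Adj x y) (hx : x ≠ u) (hx' : x ≠ v) :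
    H.Adj x y := by
  rcases h with h | h
  · exact h
  · rw [SimpleGraph.fromEdgeSet_adj] at h
    obtain ⟨hm, _⟩ := h
    rw [Set.mem_singleton_iff, Sym2.eq_iff] at hm
    rcases hm with ⟨rfl, rfl⟩ | ⟨rfl, rfl⟩
    · exact absurd rfl hx
    · exact absurd rfl hx'

lemma copyAt_reach {β : Type*} {H : SimpleGraph β} {u v : β}
    (hc : CopyAt (cube 2) (H ⊔ SimpleGraph.fromEdgeSet {s(u, v)}) u v) :
    H.Reachable u v := by
  obtain ⟨f, hinj, hhom, a, b, hab, hfa, hfb⟩ := hc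
  obtain ⟨i, hne, hoff⟩ := cube_adj.mp hab
  obtain ⟨j, hji⟩ : ∃ j : Fin 2, j ≠ i := by
    fin_cases i
    · exact ⟨1, by decide⟩
    · exact ⟨0, by decide⟩
  have hzm : ∀ z : ZMod 2, z + 1 ≠ z := by decide
  set a2 := Function.update a j (a j + 1) with ha2
  set b2 := Function.update b j (b j + 1) with hb2
  have hfin2 : ∀ l : Fin 2, l ≠ i → l = j := by
    intro l hl
    fin_cases i <;> fin_cases j <;> fin_cases l <;> simp_all <;> rfl
  have haa2 : (cube 2).Adj a a2 := by
    refine cube_adj.mpr ⟨j, ?_, fun l hl => ?_⟩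
    · rw [ha2, Function.update_self]
      exact fun hh => hzm _ hh.symm
    · rw [ha2, Function.update_of_ne hl]
  have hbb2 : (cube 2).Adj b b2 := by
    refine cube_adj.mpr ⟨j, ?_, fun l hl => ?_⟩
    · rw [hb2, Function.update_self]
      exact fun hh => hzm _ hh.symm
    · rw [hb2, Function.update_of_ne hl]
  have ha2i : a2 i = a i := by rw [ha2, Function.update_of_ne (Ne.symm hji)]
  have hb2i : b2 i = b i := by rw [hb2, Function.update_of_ne (Ne.symm hji)]
  have ha2b2 : (cube 2).Adj a2 b2 := by
    refine cube_adj.mpr ⟨i, ?_, fun l hl => ?_⟩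
    · rw [ha2i, hb2i]; exact hne
    · have hlj := hfin2 l hl
      subst hlj
      rw [ha2, hb2, Function.update_self, Function.update_self, hoff _ hji]
  have hne_a2a : a2 ≠ a := fun hh => hzm (a j) (by
    have := congrFun hh j
    rwa [ha2, Function.update_self] at this)
  have hne_b2b : b2 ≠ b := fun hh => hzm (b j) (by
    have := congrFun hh j
    rwa [hb2, Function.update_self] at this)
  have hne_a2b : a2 ≠ b := fun hh => hne (by rw [← ha2i, hh])
  have hne_b2a : b2 ≠ a := fun hh => hne (by rw [← hb2i, hh])
  have hxu : ∀ {x : Fin 2 → ZMod 2}, x ≠ a → f x ≠ u := by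
    intro x hx he
    exact hx (hinj (he.trans hfa.symm))
  have hxv : ∀ {x : Fin 2 → ZMod 2}, x ≠ b → f x ≠ v := by
    intro x hx he
    exact hx (hinj (he.trans hfb.symm))
  have h1 : H.Adj (f a2) (f a) :=
    adj_of_sup_not_eq (hhom haa2).symm (hxu hne_a2a) (hxv hne_a2b)
  have h2 : H.Adj (f b2) (f b) :=
    adj_of_sup_not_eq (hhom hbb2).symm (hxu hne_b2a) (hxv hne_b2b)
  have h3 : H.Adj (f a2) (f b2) :=
    adj_of_sup_not_eq (hhom ha2b2) (hxu hne_a2a) (hxv hne_a2b)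
  rw [← hfa, ← hfb]
  exact (h1.symm.reachable).trans (h3.reachable.trans h2.reachable)

lemma reach_sup_edge {β : Type*} {H : SimpleGraph β} {u v : β} (huv : H.Reachable u v)
    {x y : β} (h : (H ⊔ SimpleGraph.fromEdgeSet {s(u, v)}).Reachable x y) :
    H.Reachable x y := by
  obtain ⟨p⟩ := h
  induction p with
  | nil => rfl
  | cons hadj p ih =>
    refine Reachable.trans ?_ ih
    rcases hadj with hadj | hadj
    · exact hadj.reachable
    · rw [SimpleGraph.fromEdgeSet_adj] at hadj
      obtain ⟨hm, _⟩ := hadj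
      rw [Set.mem_singleton_iff, Sym2.eq_iff] at hm
      rcases hm with ⟨rfl, rfl⟩ | ⟨rfl, rfl⟩
      · exact huv
      · exact huv.symm

lemma ws_reachable {β : Type*} {F G : SimpleGraph β}
    (h : WeaklySaturated F G (cube 2)) :
    ∀ x y, F.Reachable x y → G.Reachable x y := by
  obtain ⟨hle, n, seq, h0, hn, hstep⟩ := h
  have key : ∀ m, m ≤ n → ∀ x y, (seq m).Reachable x y → G.Reachable x y := by
    intro m
    induction m with
    | zero => intro _ x y hxy; rwa [h0] at hxy
    | succ m ih =>
      intro hm x y hxy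
      obtain ⟨u, v, _, _, heqs, hcopy⟩ := hstep m (by omega)
      rw [heqs] at hxy hcopy
      have huv := copyAt_reach hcopy
      exact ih (by omega) x y (reach_sup_edge huv hxy)
  intro x y hxy
  exact key n le_rfl x y (hn ▸ hxy)

lemma conn_card_le {β : Type*} [Fintype β] {G : SimpleGraph β} (h : G.Connected) :
    Fintype.card β ≤ G.edgeSet.ncard + 1 := by
  classical
  haveI := h.nonempty
  obtain ⟨r⟩ := id h.nonempty
  have key : ∀ v : {x : β // x ≠ r}, ∃ w, G.Adj v.1 w ∧ G.dist r w + 1 = G.dist r v.1 := by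
    rintro ⟨v, hv⟩
    show ∃ w, G.Adj v w ∧ G.dist r w + 1 = G.dist r v
    have hr : G.Reachable r v := h.preconnected r v
    obtain ⟨p, hp⟩ := hr.exists_walk_length_eq_dist
    obtain ⟨w, hadj, q, hq⟩ := SimpleGraph.Walk.exists_eq_cons_of_ne hv p.reverse
    refine ⟨w, hadj, ?_⟩
    have hlen : q.length + 1 = G.dist r v := by
      have := congrArg SimpleGraph.Walk.length hq
      rw [SimpleGraph.Walk.length_reverse, hp, SimpleGraph.Walk.length_cons] at this
      omega
    have hle1 : G.dist r w ≤ q.length := by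
      have := SimpleGraph.dist_le q.reverse
      rwa [SimpleGraph.Walk.length_reverse] at this
    have hge : G.dist r v ≤ G.dist r w + 1 := by
      obtain ⟨m, hm⟩ := (h.preconnected r w).exists_walk_length_eq_dist
      have := SimpleGraph.dist_le (m.concat hadj.symm)
      rwa [SimpleGraph.Walk.length_concat, hm] at this
    omega
  choose fn hadj hdist using key
  have hinj : Function.Injective
      (fun v : {x : β // x ≠ r} => (⟨s(v.1, fn v), (hadj v)⟩ : G.edgeSet)) := by
    intro v v' hvv'
    have heq : s(v.1, fn v) = s(v'.1, fn v') := congrArg Subtype.val hvv'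
    rw [Sym2.eq_iff] at heq
    rcases heq with ⟨h1, _⟩ | ⟨h1, h2⟩
    · exact Subtype.ext h1
    · exfalso
      have d1 := hdist v
      have d2 := hdist v'
      rw [← h2] at d2
      rw [← h1] at d2
      omega
  have hcard : Fintype.card {x : β // x ≠ r} ≤ Fintype.card G.edgeSet :=
    Fintype.card_le_of_injective _ hinj
  have h1 : Fintype.card {x : β // x ≠ r} = Fintype.card β - 1 := by
    simp [Fintype.card_subtype_compl]
  have h2 : G.edgeSet.ncard = Fintype.card G.edgeSet := by
    rw [← Nat.card_coe_set_eq, Nat.card_eq_fintype_card]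
  have h3 : 1 ≤ Fintype.card β := Fintype.card_pos
  omega

lemma tree_ncard {d : ℕ} : (tree d).edgeSet.ncard = 2 ^ d - 1 := by
  classical
  have hcardV : Fintype.card (V d) = 2 ^ d := by simp
  have hc := tree_isTree.card_edgeFinset (G := tree d)
  rw [hcardV] at hc
  have h2 : (tree d).edgeSet.ncard = (tree d).edgeFinset.card := by
    rw [← Nat.card_coe_set_eq, Nat.card_eq_fintype_card, SimpleGraph.edgeFinset_card]
  omega

end WsatAux

open WsatAux in
theorem stmt_16 (d : ℕ) (hd : 2 ≤ d) :
    (∃ T : SimpleGraph (Fin d → ZMod 2), T ≤ cube d ∧ T.IsTree ∧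
      WeaklySaturated (cube d) T (cube 2)) ∧
    wsatNum (cube d) (cube 2) = 2 ^ d - 1 := by
  classical
  constructor
  · exact ⟨tree d, tree_le_cube, tree_isTree, ws_tree⟩
  · have hmem : (2 ^ d - 1) ∈ {n | ∃ G, WeaklySaturated (cube d) G (cube 2) ∧ G.edgeSet.ncard = n} :=
      ⟨tree d, ws_tree, tree_ncard⟩
    apply le_antisymm
    · exact Nat.sInf_le hmem
    · apply le_csInf ⟨_, hmem⟩
      rintro n ⟨G, hG, rfl⟩
      have hconn : G.Connected := by
        constructor
        intro x y
        refine ws_reachable hG x y ?_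
        exact ((tree_reach_zero x).trans (tree_reach_zero y).symm).mono tree_le_cube
      have hcard := conn_card_le hconn
      have hcardV : Fintype.card (V d) = 2 ^ d := by simp
      rw [hcardV] at hcard
      have h2d : 1 ≤ 2 ^ d := Nat.one_le_two_pow
      omega
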